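/- Let k ⊆ K be algebraically closed fields, let ν_k be a valuation on k (possibly trivial) and ν a valuation on K extending ν_k, with neither field assumed complete. Let I be an ideal of the Laurent polynomial ring k[x_1^{±1}, ..., x_m^{±1}] and let I_K = I·K[x_1^{±1}, ..., x_m^{±1}] be its extension. Then T_trop(I) = T_trop(I_K), where over each field T_trop is computed with the respective valuation: T_trop(J) = {v ∈ ℝ^m : for every nonzero f ∈ J, the minimum of ν(a_u) + ⟨u, v⟩ over u ∈ supp(f) is attained by at least two distinct u}. -/

import Mathlib

open scoped BigOperators Classical

noncomputable section

/-- The extended real line `R̄ = ℝ ∪ {∞}`. -/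
abbrev Rbar : Type := WithTop ℝ

/-- The map `a ↦ exp (−a)`, sending `∞` to `0`. -/
def expNeg (t : Rbar) : ℝ := if h : t = ⊤ then 0 else Real.exp (-(t.untop h))

/-- The topology on `R̄` in which `ℝ` carries its usual topology and the completed rays
`(a, ∞]` are a basis of neighborhoods of `∞`; equivalently, the topology induced by the
injection `expNeg : R̄ → ℝ`, which is a homeomorphism onto `[0, ∞)`. -/
instance : TopologicalSpace Rbar := TopologicalSpace.induced expNeg inferInstance

/-- `−log r`, with `−log 0 = ∞`. -/
def negLog (r : ℝ) : Rbar := if r = 0 then ⊤ else (((-Real.log r : ℝ)) : Rbar)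

/-- `ν : K → ℝ ∪ {∞}` is a (nonarchimedean) valuation: `ν(0) = ∞`,
`ν(ab) = ν(a) + ν(b)`, and `ν(a + b) ≥ min (ν a) (ν b)`. -/
structure IsVal {K : Type} [Field K] (ν : K → Rbar) : Prop where
  map_zero : ν 0 = ⊤
  map_mul : ∀ a b : K, ν (a * b) = ν a + ν b
  min_le_add : ∀ a b : K, min (ν a) (ν b) ≤ ν (a + b)

/-- The valuation `ν` is nontrivial: `ν(K*) ≠ {0}`. -/
def IsNontrivialVal {K : Type} [Field K] (ν : K → Rbar) : Prop :=
  ∃ a : K, a ≠ 0 ∧ ν a ≠ 0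

/-- The trivial valuation on a field `k`: `ν(a) = 0` for `a ≠ 0` and `ν(0) = ∞`. -/
def nuTriv (k : Type) [Field k] : k → Rbar := fun a => if a = 0 then ⊤ else 0

/-- `K` is complete with respect to the valuation `ν`, i.e. with respect to the induced
nonarchimedean absolute value `expNeg ∘ ν`: every Cauchy sequence converges. -/
def VComplete {K : Type} [Field K] (ν : K → Rbar) : Prop :=
  ∀ s : ℕ → K,
    (∀ ε : ℝ, 0 < ε → ∃ N : ℕ, ∀ p ≥ N, ∀ q ≥ N, expNeg (ν (s p - s q)) < ε) →
    ∃ L : K, ∀ ε : ℝ, 0 < ε → ∃ N : ℕ, ∀ p ≥ N, expNeg (ν (s p - L)) < ε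

/-- A multiplicative seminorm on a commutative ring `A`: a nonnegative real-valued
function with `|0| = 0`, `|1| = 1`, `|fg| = |f|·|g|` and `|f + g| ≤ |f| + |g|`. -/
structure IsMultSeminorm {A : Type} [CommRing A] (p : A → ℝ) : Prop where
  nonneg : ∀ f, 0 ≤ p f
  map_zero : p 0 = 0
  map_one : p 1 = 1
  map_mul : ∀ f g, p (f * g) = p f * p g
  add_le : ∀ f g, p (f + g) ≤ p f + p g

/-- A seminorm on the `K`-algebra `A` is compatible with `ν` if `|a| = exp(−ν(a))` for
every scalar `a ∈ K`. -/
def Compat {K A : Type} [Field K] [CommRing A] [Algebra K A] (ν : K → Rbar) (p : A → ℝ) :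
    Prop :=
  ∀ a : K, p (algebraMap K A a) = expNeg (ν a)

/-- The analytification `X^an` of the affine variety `X = Spec A` over the complete
nonarchimedean field `(K, ν)`: the set of multiplicative seminorms on `A` compatible with
`ν`, topologized (as a subset of `A → ℝ` with the product topology) by the coarsest
topology making `x ↦ |f|_x` continuous for every `f ∈ A`. -/
def Xan (K A : Type) [Field K] [CommRing A] [Algebra K A] (ν : K → Rbar) : Set (A → ℝ) :=
  {p | IsMultSeminorm p ∧ Compat ν p}

/-- The analytification `X^an` over a trivially valued field `k`: the set of
multiplicative seminorms on `A` that are equal to `1` on `k*`, with the topology of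
pointwise convergence. -/
def XanTriv (k A : Type) [Field k] [CommRing A] [Algebra k A] : Set (A → ℝ) :=
  {p | IsMultSeminorm p ∧ ∀ a : k, a ≠ 0 → p (algebraMap k A a) = 1}

/-- The projection `π_ι : X^an → R̄^m` attached to the affine embedding `ι` given by the
generators `f 0, ..., f (m-1)` of `A`: `x ↦ (−log|f 0|_x, ..., −log|f (m-1)|_x)`. -/
def piIota {K A : Type} [Field K] [CommRing A] [Algebra K A] (ν : K → Rbar) {m : ℕ}
    (f : Fin m → A) (x : ↥(Xan K A ν)) : Fin m → Rbar :=
  fun i => negLog (x.1 (f i))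

/-- The projection `π_ι : X^an → R̄^m` for a trivially valued base field. -/
def piIotaTriv {k A : Type} [Field k] [CommRing A] [Algebra k A] {m : ℕ}
    (f : Fin m → A) (x : ↥(XanTriv k A)) : Fin m → Rbar :=
  fun i => negLog (x.1 (f i))

/-- The tropicalization `Trop(X, ι)` of the affine embedding `ι : X ↪ A^m` of
`X = Spec A` given by the generators `f` of `A`: the closure in `R̄^m` of the set of
coordinatewise valuations of the `K`-points of `X`. -/
def TropX {K A : Type} [Field K] [CommRing A] [Algebra K A] (ν : K → Rbar) {m : ℕ}
    (f : Fin m → A) : Set (Fin m → Rbar) :=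
  closure {v | ∃ φ : A →ₐ[K] K, v = fun i => ν (φ (f i))}

/-- The tropicalization `Trop(φ) : R̄^m → R̄^n` of the equivariant morphism
`φ : A^m → A^n` whose coordinates are `y_j ↦ c_j · x^{a_j}`, namely
`v ↦ (ν(c_1) + ⟨a_1, v⟩, ..., ν(c_n) + ⟨a_n, v⟩)`, with the conventions `ν(0) = ∞`,
`∞ + t = ∞`, `a_i · ∞ = ∞` for `a_i > 0`, and `0 · ∞ = 0`. -/
def tropMap {K : Type} [Field K] (ν : K → Rbar) {m n : ℕ} (c : Fin n → K)
    (a : Fin n → Fin m → ℕ) (v : Fin m → Rbar) : Fin n → Rbar :=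
  fun j => ν (c j) + ∑ i, (a j i) • v i

/-- The affine embeddings of `X = Spec A`: an embedding `ι : X ↪ A^m` is a tuple of
generators of `A` as a `K`-algebra. -/
def AffEmb (K A : Type) [Field K] [CommRing A] [Algebra K A] : Type :=
  Σ m : ℕ, {f : Fin m → A // Algebra.adjoin K (Set.range f) = ⊤}

/-- The map `X^an → Π_ι R̄^{m(ι)}`, `x ↦ (π_ι(x))_ι`, over all affine embeddings `ι`. -/
def bigMap (K A : Type) [Field K] [CommRing A] [Algebra K A] (ν : K → Rbar)
    (x : ↥(Xan K A ν)) : ∀ e : AffEmb K A, Fin e.1 → Rbar :=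
  fun e => piIota ν e.2.1 x

/-- The inverse limit `varprojlim Trop(X, ι)`, realized inside `Π_ι R̄^{m(ι)}`: families
`(y_ι)` with `y_ι ∈ Trop(X, ι)` for all `ι` and `y_ȷ = Trop(φ)(y_ι)` for every
equivariant morphism `φ : A^{m(ι)} → A^{m(ȷ)}` with `ȷ = φ ∘ ι`. -/
def limitSet (K A : Type) [Field K] [CommRing A] [Algebra K A] (ν : K → Rbar) :
    Set (∀ e : AffEmb K A, Fin e.1 → Rbar) :=
  {y | (∀ e : AffEmb K A, y e ∈ TropX ν e.2.1) ∧
    ∀ (e e' : AffEmb K A) (c : Fin e'.1 → K) (a : Fin e'.1 → Fin e.1 → ℕ),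
      (∀ j, e'.2.1 j = algebraMap K A (c j) * ∏ i, (e.2.1 i) ^ (a j i)) →
      y e' = tropMap ν c a (y e)}

/-- The ring of Laurent polynomials `K[x_1^{±1}, ..., x_m^{±1}]`, i.e. the group algebra
of `ℤ^m` over `K`. -/
abbrev Laur (K : Type) [Field K] (m : ℕ) : Type := AddMonoidAlgebra K (Fin m → ℤ)

/-- Evaluation of a Laurent polynomial at a point `y ∈ K^m` (meaningful when the
relevant coordinates of `y` are invertible). -/
def lEval {K : Type} [Field K] {m : ℕ} (y : Fin m → K) (g : Laur K m) : K :=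
  ∑ u ∈ g.coeff.support, g.coeff u * ∏ i, (y i) ^ (u i)

/-- The tropical minimum of the Laurent polynomial `f` at `v ∈ ℝ^m` is attained twice:
the minimum of `ν(a_u) + ⟨u, v⟩` over `u ∈ supp(f)` is achieved by at least two distinct
`u ∈ supp(f)`.  (Equivalently, the initial form of `f` at `v` is not a monomial.) -/
def MinTwice {K : Type} [Field K] {m : ℕ} (ν : K → Rbar) (f : Laur K m) (v : Fin m → ℝ) :
    Prop :=
  ∃ u ∈ f.coeff.support, ∃ u' ∈ f.coeff.support, u ≠ u' ∧
    ν (f.coeff u) + ((∑ i, (u i : ℝ) * v i : ℝ) : Rbar)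
      = ν (f.coeff u') + ((∑ i, (u' i : ℝ) * v i : ℝ) : Rbar) ∧
    ∀ w ∈ f.coeff.support,
      ν (f.coeff u) + ((∑ i, (u i : ℝ) * v i : ℝ) : Rbar)
        ≤ ν (f.coeff w) + ((∑ i, (w i : ℝ) * v i : ℝ) : Rbar)

/-- With the trivial valuation: the minimum of `⟨u, w⟩` over `supp g` is attained by at
least two distinct `u ∈ supp g`. -/
def MinTwiceTriv {k : Type} [Field k] {m : ℕ} (g : Laur k m) (w : Fin m → ℝ) : Prop :=
  ∃ u ∈ g.coeff.support, ∃ u' ∈ g.coeff.support, u ≠ u' ∧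
    (∑ i, (u i : ℝ) * w i) = (∑ i, (u' i : ℝ) * w i) ∧
    ∀ z ∈ g.coeff.support, (∑ i, (u i : ℝ) * w i) ≤ ∑ i, (z i : ℝ) * w i

/-- The tropicalization `T_trop(J)` of an ideal of Laurent polynomials: the set of
`v ∈ ℝ^m` such that for every nonzero `f ∈ J` the tropical minimum of `f` at `v` is
attained twice. -/
def Ttrop {K : Type} [Field K] {m : ℕ} (ν : K → Rbar) (J : Ideal (Laur K m)) :
    Set (Fin m → ℝ) :=
  {v | ∀ f ∈ J, f ≠ 0 → MinTwice ν f v}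

/-- The `K`-points of the closed subvariety of the torus `T^m` cut out by the ideal `I`:
points of `(K*)^m` at which every element of `I` vanishes. -/
def torusPoints {K : Type} [Field K] {m : ℕ} (I : Ideal (Laur K m)) :
    Set (Fin m → Kˣ) :=
  {y | ∀ f ∈ I, lEval (fun i => (y i : K)) f = 0}

/-- The real number `ν(a)` (with junk value `0` when `ν(a) = ∞`, i.e. when `a = 0`). -/
def vR {K : Type} [Field K] (ν : K → Rbar) (a : K) : ℝ := WithTop.untopD 0 (ν a)

/-- The set `{trop(y) : y ∈ X(K)} ⊆ ℝ^m` of coordinatewise valuations of the `K`-points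
of the closed subvariety of the torus cut out by `I`; `trop(X)` is its closure. -/
def tropImg {K : Type} [Field K] {m : ℕ} (ν : K → Rbar) (I : Ideal (Laur K m)) :
    Set (Fin m → ℝ) :=
  {w | ∃ y ∈ torusPoints I, w = fun i => vR ν ((y i : Kˣ) : K)}

/-- The `K`-points of the closed subvariety of `A^m` cut out by the ideal `J`. -/
def affPoints {K : Type} [Field K] {m : ℕ} (J : Ideal (MvPolynomial (Fin m) K)) :
    Set (Fin m → K) :=
  {y | ∀ f ∈ J, MvPolynomial.eval y f = 0}

/-- The extended tropicalization in `R̄^m` of a set of points of `A^m(K)`: the closure of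
the set of coordinatewise valuations. -/
def TropAff {K : Type} [Field K] {m : ℕ} (ν : K → Rbar) (S : Set (Fin m → K)) :
    Set (Fin m → Rbar) :=
  closure {v | ∃ y ∈ S, v = fun i => ν (y i)}

/-- The coefficientwise extension map
`k[x_1^{±1}, ..., x_m^{±1}] → K[x_1^{±1}, ..., x_m^{±1}]` along `algebraMap k K`. -/
def laurExt (k K : Type) [Field k] [Field K] [Algebra k K] (m : ℕ) :
    Laur k m →ₐ[k] Laur K m :=
  (AddMonoidAlgebra.lift (R := k) (M := Fin m → ℤ) (A := Laur K m)) (AddMonoidAlgebra.of K (Fin m → ℤ))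

/-- The `i`-th coordinate function `x_i` in the coordinate ring
`k[X] = k[x_1^{±1}, ..., x_m^{±1}] / I` of a closed subvariety of the torus. -/
def coordLaur {k : Type} [Field k] {m : ℕ} (I : Ideal (Laur k m)) (i : Fin m) :
    Laur k m ⧸ I :=
  Ideal.Quotient.mk I (AddMonoidAlgebra.single (Pi.single i (1 : ℤ)) (1 : k))

/-- The projection `π : X^an → ℝ^m`, `x ↦ (−log|x_1|_x, ..., −log|x_m|_x)`, for a closed
subvariety of the torus over a trivially valued field. -/
def piTorus {k : Type} [Field k] {m : ℕ} (I : Ideal (Laur k m))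
    (x : ↥(XanTriv k (Laur k m ⧸ I))) : Fin m → ℝ :=
  fun i => -Real.log (x.1 (coordLaur I i))

/-- `trop(X)` for a closed subvariety of the torus over a trivially valued field: the
set of `v ∈ ℝ^m` such that for every nonzero `f ∈ I` the minimum of `⟨u, v⟩` over
`supp f` is attained at least twice. -/
def tropTrivTorus {k : Type} [Field k] {m : ℕ} (I : Ideal (Laur k m)) :
    Set (Fin m → ℝ) :=
  {v | ∀ f ∈ I, f ≠ 0 → MinTwiceTriv f v}

/-- The vanishing ideal of `X ∩ T^{I₀}` for the affine embedding of `X = Spec A` given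
by generators `f`: Laurent polynomials in the variables `x_i`, `i ∈ I₀` (support
condition), vanishing at every `k`-point `y` of `X` with `y_i ≠ 0` iff `i ∈ I₀`. -/
def stratVanishing (k A : Type) [Field k] [CommRing A] [Algebra k A] {m : ℕ}
    (f : Fin m → A) (I0 : Finset (Fin m)) : Set (Laur k m) :=
  {g | (∀ u ∈ g.coeff.support, ∀ i, i ∉ I0 → u i = 0) ∧
    ∀ φ : A →ₐ[k] k, (∀ i, φ (f i) ≠ 0 ↔ i ∈ I0) → lEval (fun i => φ (f i)) g = 0}

/-- The extended tropicalization `Trop(X, ι) ⊆ R̄^m` over a trivially valued field: the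
union over `I₀ ⊆ {1, ..., m}` of the sets `trop(X ∩ T^{I₀})`, each embedded in the
stratum `ℝ^{I₀} = {v : v_i < ∞ iff i ∈ I₀}` (coordinates `∞` off `I₀`). -/
def TropStrat (k A : Type) [Field k] [CommRing A] [Algebra k A] {m : ℕ}
    (f : Fin m → A) : Set (Fin m → Rbar) :=
  {v | ∃ (I0 : Finset (Fin m)) (w : Fin m → ℝ),
        (v = fun i => if i ∈ I0 then ((w i : ℝ) : Rbar) else ⊤) ∧
        ∀ g ∈ stratVanishing k A f I0, g ≠ 0 → MinTwiceTriv g w}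

/-- The map `X^an → Π_ι R̄^{m(ι)}` over a trivially valued field. -/
def bigMapTriv (k A : Type) [Field k] [CommRing A] [Algebra k A]
    (x : ↥(XanTriv k A)) : ∀ e : AffEmb k A, Fin e.1 → Rbar :=
  fun e => piIotaTriv e.2.1 x

/-- The inverse limit `varprojlim Trop(X, ι)` over a trivially valued field, realized
inside `Π_ι R̄^{m(ι)}`. -/
def limitSetTriv (k A : Type) [Field k] [CommRing A] [Algebra k A] :
    Set (∀ e : AffEmb k A, Fin e.1 → Rbar) :=
  {y | (∀ e : AffEmb k A, y e ∈ TropStrat k A e.2.1) ∧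
    ∀ (e e' : AffEmb k A) (c : Fin e'.1 → k) (a : Fin e'.1 → Fin e.1 → ℕ),
      (∀ j, e'.2.1 j = algebraMap k A (c j) * ∏ i, (e.2.1 i) ^ (a j i)) →
      y e' = tropMap (nuTriv k) c a (y e)}


namespace Stmt12Aux

variable {k K : Type} [Field k] [Field K] [Algebra k K] {m : ℕ}

instance laurCoeFun {R : Type} [Field R] {n : ℕ} : CoeFun (Laur R n) (fun _ => (Fin n → ℤ) → R) :=
  ⟨fun f => f.coeff⟩

lemma laurExt_single (u : Fin m → ℤ) (b : k) :
    laurExt k K m (AddMonoidAlgebra.single u b) = AddMonoidAlgebra.single u (algebraMap k K b) := by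
  unfold laurExt
  rw [AddMonoidAlgebra.lift_single]
  rw [AddMonoidAlgebra.of_apply]
  rw [AddMonoidAlgebra.smul_single, Algebra.smul_def, mul_one]
  rfl

lemma laurExt_apply (g : Laur k m) (u : Fin m → ℤ) :
    laurExt k K m g u = algebraMap k K (g u) := by
  induction g using AddMonoidAlgebra.induction_linear with
  | zero => simp [map_zero]
  | add f g hf hg =>
      rw [map_add]
      rw [show ((laurExt k K m f + laurExt k K m g) u) = laurExt k K m f u + laurExt k K m g u from rfl]
      rw [hf, hg, show ((f + g) u) = f u + g u from rfl, map_add]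
  | single a b =>
      rw [laurExt_single, AddMonoidAlgebra.coeff_single, AddMonoidAlgebra.coeff_single, Finsupp.single_apply, Finsupp.single_apply]
      split <;> simp

lemma algMap_inj : Function.Injective (algebraMap k K) :=
  (algebraMap k K).injective

lemma laurExt_support (g : Laur k m) :
    (laurExt k K m g).coeff.support = g.coeff.support := by
  ext u
  simp only [Finsupp.mem_support_iff, laurExt_apply]
  exact ⟨fun h hg => h (by rw [hg, map_zero]),
    fun h hg => h (algMap_inj (by rw [hg, map_zero]))⟩

lemma laurExt_ne_zero {g : Laur k m} (hg : g ≠ 0) : laurExt k K m g ≠ 0 := by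
  intro h
  apply hg
  refine AddMonoidAlgebra.ext (Finsupp.ext fun u => ?_)
  have h1 : laurExt k K m g u = 0 := by rw [h]; rfl
  rw [laurExt_apply] at h1
  show g u = 0
  exact algMap_inj (by rw [h1, map_zero])

lemma spanK_mul_mem (I : Ideal (Laur k m)) (r : Laur K m) {x : Laur K m}
    (hx : x ∈ Submodule.span K (laurExt k K m '' (I : Set (Laur k m)))) :
    r * x ∈ Submodule.span K (laurExt k K m '' (I : Set (Laur k m))) := by
  induction hx using Submodule.span_induction with
  | mem y hy =>
      obtain ⟨g, hg, rfl⟩ := hy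
      induction r using AddMonoidAlgebra.induction_linear with
      | zero => rw [zero_mul]; exact Submodule.zero_mem _
      | add p q hp hq => rw [add_mul]; exact Submodule.add_mem _ hp hq
      | single u c =>
          have hξ : laurExt k K m (AddMonoidAlgebra.single u (1:k)) = AddMonoidAlgebra.single u (1:K) := by
            rw [laurExt_single, map_one]
          have e1 : (AddMonoidAlgebra.single u c : Laur K m) * laurExt k K m g
              = c • laurExt k K m (AddMonoidAlgebra.single u (1:k) * g) := by
            rw [map_mul, hξ, ← smul_mul_assoc, AddMonoidAlgebra.smul_single', mul_one]
          show (AddMonoidAlgebra.single u c : Laur K m) * laurExt k K m g ∈ _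
          rw [e1]
          exact Submodule.smul_mem _ _ (Submodule.subset_span ⟨_, I.mul_mem_left _ hg, rfl⟩)
  | zero => rw [mul_zero]; exact Submodule.zero_mem _
  | add a b _ _ ha hb => rw [mul_add]; exact Submodule.add_mem _ ha hb
  | smul c a _ ha => rw [mul_smul_comm]; exact Submodule.smul_mem _ _ ha

lemma map_le_spanK (I : Ideal (Laur k m)) {f : Laur K m}
    (hf : f ∈ I.map (laurExt k K m).toRingHom) :
    f ∈ Submodule.span K (laurExt k K m '' (I : Set (Laur k m))) := by
  have hf' : f ∈ Ideal.span ((laurExt k K m).toRingHom '' (I : Set (Laur k m))) := hf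
  clear hf
  induction hf' using Submodule.span_induction with
  | mem y hy =>
      obtain ⟨g, hg, rfl⟩ := hy
      exact Submodule.subset_span ⟨g, hg, rfl⟩
  | zero => exact Submodule.zero_mem _
  | add a b _ _ ha hb => exact Submodule.add_mem _ ha hb
  | smul c a _ ha => exact spanK_mul_mem I c ha

lemma rep_coeff {n : ℕ} (β : Fin n → K) (w : Fin n → Laur k m) (u : Fin m → ℤ) :
    (∑ j, β j • laurExt k K m (w j)) u = ∑ j, (w j u) • β j := by
  rw [AddMonoidAlgebra.coeff_sum, Finset.sum_apply']
  refine Finset.sum_congr rfl fun j _ => ?_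
  rw [AddMonoidAlgebra.coeff_smul, Finsupp.smul_apply, laurExt_apply, smul_eq_mul, Algebra.smul_def, mul_comm]

lemma rep_coeff_zero {n : ℕ} {β : Fin n → K} {w : Fin n → Laur k m} (hβ : LinearIndependent k β)
    {u : Fin m → ℤ} (h : (∑ j, β j • laurExt k K m (w j)) u = 0) : ∀ j, w j u = 0 := by
  rw [rep_coeff] at h
  exact Fintype.linearIndependent_iff.1 hβ _ h

lemma refine_rep (I : Ideal (Laur k m)) {x : Laur K m}
    (hx : x ∈ Submodule.span K (laurExt k K m '' (I : Set (Laur k m)))) :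
    ∃ (n : ℕ) (β : Fin n → K) (w : Fin n → Laur k m),
      LinearIndependent k β ∧ (∀ j, w j ∈ I) ∧ x = ∑ j, β j • laurExt k K m (w j) := by
  obtain ⟨n, c, g, hsum⟩ := Submodule.mem_span_set'.1 hx
  have hmem : ∀ j, ∃ a, a ∈ I ∧ laurExt k K m a = (g j : Laur K m) := by
    intro j
    obtain ⟨a, ha, hae⟩ := (g j).2
    exact ⟨a, ha, hae⟩
  choose w hwI hwe using hmem
  set B := Module.Basis.ofVectorSpace k K with hB
  set T : Finset (Module.Basis.ofVectorSpaceIndex k K) :=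
    Finset.univ.biUnion (fun j : Fin n => (B.repr (c j)).support) with hT
  set e : Fin T.card ≃ T := T.equivFin.symm with he
  refine ⟨T.card, fun i => B (e i), fun i => ∑ j, (B.repr (c j)) (e i) • w j, ?_, ?_, ?_⟩
  · exact B.linearIndependent.comp (fun i => (e i : Module.Basis.ofVectorSpaceIndex k K))
      (Subtype.val_injective.comp e.injective)
  · intro i
    exact Submodule.sum_mem _ fun j _ => Submodule.smul_of_tower_mem _ _ (hwI j)
  · have key : ∀ j, c j = ∑ i : Fin T.card, (B.repr (c j)) (e i) • B (e i) := by
      intro j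
      have h1 : ∑ i : Fin T.card, (B.repr (c j)) (e i) • B (e i)
          = ∑ t ∈ T, (B.repr (c j)) t • B t := by
        rw [← Finset.sum_coe_sort T]
        exact (Fintype.sum_equiv e _ _ fun i => rfl)
      have h2 := B.linearCombination_repr (c j)
      rw [Finsupp.linearCombination_apply, Finsupp.sum] at h2
      rw [h1, ← Finset.sum_subset (Finset.subset_biUnion_of_mem _ (Finset.mem_univ j))
        (fun t _ ht => by rw [Finsupp.notMem_support_iff.1 ht, zero_smul])]
      exact h2.symm
    rw [← hsum]
    calc ∑ j, c j • (g j : Laur K m)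
        = ∑ j, ∑ i : Fin T.card, (B.repr (c j)) (e i) • (B (e i) • laurExt k K m (w j)) := by
          refine Finset.sum_congr rfl fun j _ => ?_
          rw [← hwe j]
          conv_lhs => rw [key j]
          rw [Finset.sum_smul]
          exact Finset.sum_congr rfl fun i _ => smul_assoc _ _ _
      _ = ∑ i : Fin T.card, ∑ j, (B.repr (c j)) (e i) • (B (e i) • laurExt k K m (w j)) :=
          Finset.sum_comm
      _ = ∑ i : Fin T.card, B (e i) • laurExt k K m (∑ j, (B.repr (c j)) (e i) • w j) := by
          refine Finset.sum_congr rfl fun i _ => ?_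
          rw [map_sum, Finset.smul_sum]
          refine Finset.sum_congr rfl fun j _ => ?_
          rw [smul_comm, map_smul]

section Val

variable {ν : K → Rbar}

lemma IsVal.one_cases (hν : IsVal ν) : ν 1 = 0 ∨ ν 1 = ⊤ := by
  have h := hν.map_mul 1 1
  rw [one_mul] at h
  by_cases htop : ν 1 = ⊤
  · exact Or.inr htop
  · obtain ⟨r, hr⟩ := WithTop.ne_top_iff_exists.1 htop
    left
    rw [← hr] at h ⊢
    rw [← WithTop.coe_add, WithTop.coe_inj] at h
    have : r = 0 := by linarith
    rw [this]; rfl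

lemma IsVal.all_top (hν : IsVal ν) {a : K} (ha : a ≠ 0) (hat : ν a = ⊤) :
    ∀ z : K, ν z = ⊤ := by
  have h1 : ν 1 = ⊤ := by
    rcases IsVal.one_cases hν with h | h
    · exfalso
      have := hν.map_mul a a⁻¹
      rw [mul_inv_cancel₀ ha, h, hat, top_add] at this
      exact (by simp : (0:Rbar) ≠ ⊤) this
    · exact h
  intro z
  have := hν.map_mul z 1
  rw [mul_one, h1, add_top] at this
  exact this

lemma IsVal.dichotomy (hν : IsVal ν) : (∀ z : K, ν z = ⊤) ∨ (∀ z : K, z ≠ 0 → ν z ≠ ⊤) := by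
  by_cases h : ∃ a : K, a ≠ 0 ∧ ν a = ⊤
  · obtain ⟨a, ha, hat⟩ := h
    exact Or.inl (IsVal.all_top hν ha hat)
  · push_neg at h
    exact Or.inr h

lemma IsVal.neg_eq (hν : IsVal ν) (b : K) : ν (-b) = ν b := by
  rcases IsVal.one_cases hν with h | h
  · have hm1 : ν (-1 : K) = 0 := by
      have := hν.map_mul (-1) (-1)
      rw [neg_mul_neg, one_mul, h] at this
      by_cases htop : ν (-1 : K) = ⊤
      · rw [htop, top_add] at this; exact absurd this.symm (by simp)
      · obtain ⟨r, hr⟩ := WithTop.ne_top_iff_exists.1 htop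
        rw [← hr] at this ⊢
        have h2 : r + r = 0 := by exact_mod_cast this.symm
        have h3 : r = 0 := by linarith
        rw [h3]; rfl
    have := hν.map_mul (-1) b
    rw [neg_one_mul, hm1, zero_add] at this
    exact this
  · have h1 := IsVal.all_top hν one_ne_zero h
    rw [h1 _, h1 _]

lemma IsVal.min_le_sub (hν : IsVal ν) (a b : K) : min (ν a) (ν b) ≤ ν (a - b) := by
  rw [sub_eq_add_neg, ← IsVal.neg_eq hν b]
  exact hν.min_le_add a (-b)

lemma IsVal.sub_eq_left (hν : IsVal ν) {a b : K} (h : ν a < ν b) : ν (a - b) = ν a := by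
  refine le_antisymm ?_ ?_
  · by_contra hc
    push_neg at hc
    have h2 : ν a < ν (a - b) := hc
    have hmin := hν.min_le_add (a - b) b
    rw [sub_add_cancel] at hmin
    exact absurd hmin (not_le.2 (lt_min h2 h))
  · calc ν a = min (ν a) (ν b) := (min_eq_left h.le).symm
      _ ≤ ν (a - b) := IsVal.min_le_sub hν a b

end Val

lemma coe_untop' {p : Rbar} (h : p ≠ ⊤) : ((p.untopD 0 : ℝ) : Rbar) = p := by
  obtain ⟨r, hr⟩ := WithTop.ne_top_iff_exists.1 h
  rw [← hr]
  rfl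

lemma eq_coe_of_add_coe {p : Rbar} {r s : ℝ} (h : p + (r : Rbar) = (s : Rbar)) :
    p = ((s - r : ℝ) : Rbar) := by
  by_cases htop : p = ⊤
  · rw [htop, top_add] at h; exact absurd h (by simp)
  · obtain ⟨t, ht⟩ := WithTop.ne_top_iff_exists.1 htop
    rw [← ht] at h ⊢
    rw [← WithTop.coe_add, WithTop.coe_inj] at h
    rw [WithTop.coe_inj]
    linarith

lemma eq_coe_of_coe_add {p : Rbar} {r s : ℝ} (h : (r : Rbar) + p = (s : Rbar)) :
    p = ((s - r : ℝ) : Rbar) := by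
  rw [add_comm] at h
  exact eq_coe_of_add_coe h

/-- The real tropical value of the coefficient of `x` at `u`. -/
def tv (ν : K → Rbar) (v : Fin m → ℝ) (x : Laur K m) (u : Fin m → ℤ) : ℝ :=
  (ν (x u)).untopD 0 + ∑ i, (u i : ℝ) * v i

/-- The tropical minimum of `x` at `v` is attained at a unique `u₀`. -/
def UArg (ν : K → Rbar) (v : Fin m → ℝ) (x : Laur K m) : Prop :=
  ∃ u0 ∈ x.coeff.support, ∀ u ∈ x.coeff.support, u ≠ u0 → tv ν v x u0 < tv ν v x u

lemma nu_coe {ν : K → Rbar} (hnd : ∀ z : K, z ≠ 0 → ν z ≠ ⊤) {x : Laur K m} {u : Fin m → ℤ}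
    (hu : u ∈ x.coeff.support) : ν (x u) = (((ν (x u)).untopD 0 : ℝ) : Rbar) :=
  (coe_untop' (hnd _ (Finsupp.mem_support_iff.1 hu))).symm

lemma uarg_of_not_minTwice {ν : K → Rbar} (hnd : ∀ z : K, z ≠ 0 → ν z ≠ ⊤)
    {v : Fin m → ℝ} {x : Laur K m} (hx : x ≠ 0) (h : ¬ MinTwice ν x v) : UArg ν v x := by
  obtain ⟨u0, hu0, hu0min⟩ :=
    Finset.exists_min_image x.coeff.support (tv ν v x) (Finsupp.support_nonempty_iff.2 (AddMonoidAlgebra.coeff_eq_zero.not.2 hx))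
  refine ⟨u0, hu0, fun u hu hne => ?_⟩
  rcases lt_or_eq_of_le (hu0min u hu) with hlt | heq
  · exact hlt
  · exfalso
    apply h
    have key : ∀ z ∈ x.coeff.support,
        ν (x z) + ((∑ i, (z i : ℝ) * v i : ℝ) : Rbar) = ((tv ν v x z : ℝ) : Rbar) := by
      intro z hz
      rw [nu_coe hnd hz, ← WithTop.coe_add]
      rfl
    refine ⟨u0, hu0, u, hu, hne.symm, ?_, ?_⟩
    · rw [key u0 hu0, key u hu, WithTop.coe_inj]
      exact heq
    · intro w hw
      rw [key u0 hu0, key w hw, WithTop.coe_le_coe]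
      exact hu0min w hw

lemma step {ν : K → Rbar} (hν : IsVal ν) (hnd : ∀ z : K, z ≠ 0 → ν z ≠ ⊤)
    (v : Fin m → ℝ) {x h : Laur K m} (hxU : UArg ν v x)
    (hh0 : h ≠ 0) (hsub : h.coeff.support ⊆ x.coeff.support) (hne : h.coeff.support ≠ x.coeff.support) :
    ∃ y : Laur K m, (y = h ∨ ∃ lam : K, y = x - lam • h) ∧ y ≠ 0 ∧ UArg ν v y ∧
      y.coeff.support.card < x.coeff.support.card := by
  classical
  obtain ⟨u0, hu0x, hu0min⟩ := hxU
  set a : (Fin m → ℤ) → ℝ := fun u => (ν (x u)).untopD 0 with ha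
  set b : (Fin m → ℤ) → ℝ := fun u => (ν (h u)).untopD 0 with hb
  set d : (Fin m → ℤ) → ℝ := fun u => a u - b u with hd
  have hcoex : ∀ u ∈ x.coeff.support, ν (x u) = ((a u : ℝ) : Rbar) := fun u hu => nu_coe hnd hu
  have hcoeh : ∀ u ∈ h.coeff.support, ν (h u) = ((b u : ℝ) : Rbar) := fun u hu => nu_coe hnd hu
  by_cases hB : u0 ∈ h.coeff.support ∧ ∀ u ∈ h.coeff.support, d u ≤ d u0
  · -- take y = h
    refine ⟨h, Or.inl rfl, hh0, ⟨u0, hB.1, fun u hu hune => ?_⟩, ?_⟩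
    · have h1 : tv ν v x u0 < tv ν v x u := hu0min u (hsub hu) hune
      have h2 : d u ≤ d u0 := hB.2 u hu
      simp only [tv, ha, hb, hd] at *
      linarith
    · exact Finset.card_lt_card (HasSubset.Subset.ssubset_of_ne hsub hne)
  · -- subtraction case
    have hA : u0 ∈ h.coeff.support → ∃ u ∈ h.coeff.support, d u0 < d u := by
      intro h0
      by_contra hcon
      push_neg at hcon
      exact hB ⟨h0, hcon⟩
    obtain ⟨us, husH, husmax⟩ :=
      Finset.exists_max_image h.coeff.support d (Finsupp.support_nonempty_iff.2 (AddMonoidAlgebra.coeff_eq_zero.not.2 hh0))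
    have hus0 : u0 ∈ h.coeff.support → d u0 < d us := by
      intro h0
      obtain ⟨u, hu, hdu⟩ := hA h0
      exact lt_of_lt_of_le hdu (husmax u hu)
    have husne : us ≠ u0 := by
      intro hh
      rw [hh] at husH
      exact absurd (hus0 husH) (by rw [hh]; exact lt_irrefl _)
    have hhus : h us ≠ 0 := Finsupp.mem_support_iff.1 husH
    have hxus : x us ≠ 0 := Finsupp.mem_support_iff.1 (hsub husH)
    set lam : K := x us / h us with hlam
    have hlam_mul : lam * h us = x us := div_mul_cancel₀ _ hhus
    have hlamv : ν lam = ((d us : ℝ) : Rbar) := by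
      have h1 : ν (x us) = ν lam + ν (h us) := by rw [← hlam_mul, hν.map_mul]
      rw [hcoex us (hsub husH), hcoeh us husH] at h1
      have := eq_coe_of_add_coe h1.symm
      rw [this]
    set y : Laur K m := x - lam • h with hy
    have ycoef : ∀ u, y u = x u - lam * h u := by
      intro u
      rw [hy, AddMonoidAlgebra.coeff_sub, AddMonoidAlgebra.coeff_smul, Finsupp.sub_apply, Finsupp.smul_apply, smul_eq_mul]
    have hyus : y us = 0 := by rw [ycoef us, hlam_mul, sub_self]
    have hysubx : y.coeff.support ⊆ x.coeff.support := by
      intro u hu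
      rw [Finsupp.mem_support_iff] at hu ⊢
      intro hxu
      apply hu
      have hhu : h u = 0 := by
        by_contra hcon
        exact (Finsupp.mem_support_iff.1 (hsub (Finsupp.mem_support_iff.2 hcon))) hxu
      rw [ycoef u, hxu, hhu, mul_zero, sub_zero]
    have hlamh : ∀ u ∈ h.coeff.support, ν (lam * h u) = ((d us + b u : ℝ) : Rbar) := by
      intro u hu
      rw [hν.map_mul, hlamv, hcoeh u hu, ← WithTop.coe_add]
    -- value at u0
    have hyu0 : ν (y u0) = ((a u0 : ℝ) : Rbar) := by
      by_cases hcase : u0 ∈ h.coeff.support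
      · have h1 : ν (x u0) < ν (lam * h u0) := by
          rw [hcoex u0 hu0x, hlamh u0 hcase, WithTop.coe_lt_coe]
          have := hus0 hcase
          simp only [hd] at this ⊢
          linarith
        rw [ycoef u0, IsVal.sub_eq_left hν h1, hcoex u0 hu0x]
      · have hhu : h u0 = 0 := Finsupp.notMem_support_iff.1 hcase
        rw [ycoef u0, hhu, mul_zero, sub_zero, hcoex u0 hu0x]
    have hyu0ne : y u0 ≠ 0 := by
      intro hcon
      rw [ycoef u0] at hcon
      rw [ycoef u0, hcon, hν.map_zero] at hyu0
      exact absurd hyu0.symm (by simp)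
    have hy0 : y ≠ 0 := fun hcon => hyu0ne (by rw [hcon]; rfl)
    have hu0y : u0 ∈ y.coeff.support := Finsupp.mem_support_iff.2 hyu0ne
    refine ⟨y, Or.inr ⟨lam, rfl⟩, hy0, ⟨u0, hu0y, fun u hu hune => ?_⟩, ?_⟩
    · -- unique argmin for y
      have hux : u ∈ x.coeff.support := hysubx hu
      have h1 : tv ν v x u0 < tv ν v x u := hu0min u hux hune
      have h2 : ((a u : ℝ) : Rbar) ≤ ν (y u) := by
        by_cases hcase : u ∈ h.coeff.support
        · have h3 : min (ν (x u)) (ν (lam * h u)) ≤ ν (y u) := by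
            rw [ycoef u]
            exact IsVal.min_le_sub hν _ _
          refine le_trans (le_min ?_ ?_) h3
          · rw [hcoex u hux]
          · rw [hlamh u hcase, WithTop.coe_le_coe]
            have := husmax u hcase
            simp only [hd] at this ⊢
            linarith
        · have hhu : h u = 0 := Finsupp.notMem_support_iff.1 hcase
          rw [ycoef u, hhu, mul_zero, sub_zero, hcoex u hux]
    -- convert to real
      have h4 : a u ≤ (ν (y u)).untopD 0 := by
        rw [nu_coe hnd hu] at h2
        exact_mod_cast h2
      have h5 : (ν (y u0)).untopD 0 = a u0 := by rw [hyu0]; rfl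
      simp only [tv, ha] at h1 ⊢
      rw [h5]
      have := h1
      linarith
    · -- cardinality
      have hssub : y.coeff.support ⊂ x.coeff.support := by
        rw [Finset.ssubset_def]
        refine ⟨hysubx, fun hcon => ?_⟩
        have : us ∈ y.coeff.support := hcon (hsub husH)
        exact (Finsupp.mem_support_iff.1 this) hyus
      exact Finset.card_lt_card hssub

end Stmt12Aux
/-- Proposition A.1: invariance of tropicalization under extension of
valued fields.  Let `k ⊆ K` be algebraically closed fields with valuations `ν_k` on `k`
(possibly trivial) and `ν` on `K` extending `ν_k`, neither field assumed complete.  For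
an ideal `I` of `k[x_1^{±1}, ..., x_m^{±1}]` with extension `I_K`, one has
`T_trop(I) = T_trop(I_K)`. -/
theorem stmt12 {k K : Type} [Field k] [Field K] [IsAlgClosed k] [IsAlgClosed K]
    [Algebra k K]
    (νk : k → Rbar) (ν : K → Rbar) (hνk : IsVal νk) (hν : IsVal ν)
    (hext : ∀ a : k, ν (algebraMap k K a) = νk a)
    (m : ℕ) (I : Ideal (Laur k m)) :
    Ttrop νk I = Ttrop ν (I.map (laurExt k K m).toRingHom) := by
  classical
  ext v
  simp only [Ttrop, Set.mem_setOf_eq]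
  constructor
  · -- hard direction
    intro hv f hfK hf0
    have hfM := Stmt12Aux.map_le_spanK I hfK
    rcases Stmt12Aux.IsVal.dichotomy hν with hdeg | hnd
    · -- degenerate valuation
      obtain ⟨n, β, w, hβ, hwI, hrep⟩ := Stmt12Aux.refine_rep I hfM
      have hcoe : ∀ u, f u = ∑ j, (w j u) • β j := fun u => by
        rw [hrep]; exact Stmt12Aux.rep_coeff β w u
      obtain ⟨u1, hu1⟩ := Finsupp.support_nonempty_iff.2 (AddMonoidAlgebra.coeff_eq_zero.not.2 hf0)
      have hfu1 : f u1 ≠ 0 := Finsupp.mem_support_iff.1 hu1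
      have hj : ∃ j, w j u1 ≠ 0 := by
        by_contra hall
        push_neg at hall
        exact hfu1 (by
          rw [hcoe u1]
          exact Finset.sum_eq_zero fun j _ => by rw [hall j, zero_smul])
      obtain ⟨j0, hj0⟩ := hj
      have hw0 : w j0 ≠ 0 := fun hh => hj0 (by rw [hh]; rfl)
      obtain ⟨p, hp, q, hq, hpq, _, _⟩ := hv (w j0) (hwI j0) hw0
      have hsupp : ∀ z, z ∈ (w j0).coeff.support → z ∈ f.coeff.support := by
        intro z hz
        rw [Finsupp.mem_support_iff] at hz ⊢
        intro hfz
        apply hz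
        have h0 : (∑ j, β j • laurExt k K m (w j)) z = 0 := by rw [← hrep]; exact hfz
        exact Stmt12Aux.rep_coeff_zero hβ h0 j0
      refine ⟨p, hsupp p hp, q, hsupp q hq, hpq, ?_, ?_⟩
      · rw [hdeg (f p), hdeg (f q), top_add, top_add]
      · intro z hz
        rw [hdeg (f p), hdeg (f z), top_add, top_add]
    · -- nondegenerate valuation
      by_contra hMT
      have hfU := Stmt12Aux.uarg_of_not_minTwice hnd hf0 hMT
      set M := Submodule.span K ((laurExt k K m) '' (I : Set (Laur k m))) with hM
      have hex : ∃ nn : ℕ, ∃ x : Laur K m,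
          (x ∈ M ∧ x ≠ 0 ∧ Stmt12Aux.UArg ν v x) ∧ x.coeff.support.card = nn :=
        ⟨f.coeff.support.card, f, ⟨hfM, hf0, hfU⟩, rfl⟩
      obtain ⟨x, ⟨hxM, hx0, hxU⟩, hxcard⟩ := Nat.find_spec hex
      have hminimal : ∀ y : Laur K m, y ∈ M → y ≠ 0 → Stmt12Aux.UArg ν v y →
          ¬ (y.coeff.support.card < x.coeff.support.card) := by
        intro y hyM hy0 hyU hlt
        rw [hxcard] at hlt
        exact Nat.find_min hex hlt ⟨y, ⟨hyM, hy0, hyU⟩, rfl⟩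
      have claimA : ∀ h : Laur K m, h ∈ M → h ≠ 0 → h.coeff.support ⊆ x.coeff.support →
          h.coeff.support = x.coeff.support := by
        intro h hhM hh0 hsub
        by_contra hne
        obtain ⟨y, hy, hy0, hyU, hycard⟩ := Stmt12Aux.step hν hnd v hxU hh0 hsub hne
        have hyM : y ∈ M := by
          rcases hy with rfl | ⟨lam, rfl⟩
          · exact hhM
          · exact Submodule.sub_mem _ hxM (Submodule.smul_mem _ _ hhM)
        exact hminimal y hyM hy0 hyU hycard
      obtain ⟨n, β, w, hβ, hwI, hrep⟩ := Stmt12Aux.refine_rep I hxM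
      have hcoe : ∀ u, x u = ∑ j, (w j u) • β j := fun u => by
        rw [hrep]; exact Stmt12Aux.rep_coeff β w u
      obtain ⟨u0, hu0x, hu0min⟩ := hxU
      have hxu0 : x u0 ≠ 0 := Finsupp.mem_support_iff.1 hu0x
      have hj : ∃ j, w j u0 ≠ 0 := by
        by_contra hall
        push_neg at hall
        exact hxu0 (by
          rw [hcoe u0]
          exact Finset.sum_eq_zero fun j _ => by rw [hall j, zero_smul])
      obtain ⟨j0, hj0⟩ := hj
      have hw0 : w j0 ≠ 0 := fun hh => hj0 (by rw [hh]; rfl)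
      set g0 := w j0 with hg0def
      have hsupp : ∀ z, z ∈ g0.coeff.support → z ∈ x.coeff.support := by
        intro z hz
        rw [Finsupp.mem_support_iff] at hz ⊢
        intro hxz
        apply hz
        have h0 : (∑ j, β j • laurExt k K m (w j)) z = 0 := by rw [← hrep]; exact hxz
        exact Stmt12Aux.rep_coeff_zero hβ h0 j0
      have hEg0M : laurExt k K m g0 ∈ M := Submodule.subset_span ⟨g0, hwI j0, rfl⟩
      have hEg0ne : laurExt k K m g0 ≠ 0 := Stmt12Aux.laurExt_ne_zero hw0
      have hEsub : (laurExt k K m g0).coeff.support ⊆ x.coeff.support := by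
        rw [Stmt12Aux.laurExt_support]
        exact fun z hz => hsupp z hz
      have hsEq : (laurExt k K m g0).coeff.support = x.coeff.support := claimA _ hEg0M hEg0ne hEsub
      have hgsupp : g0.coeff.support = x.coeff.support := by
        rw [← Stmt12Aux.laurExt_support (K := K) g0]
        exact hsEq
      have hg0u0 : algebraMap k K (g0 u0) ≠ 0 := by
        have h1 : u0 ∈ g0.coeff.support := by rw [hgsupp]; exact hu0x
        intro hcon
        exact (Finsupp.mem_support_iff.1 h1) (Stmt12Aux.algMap_inj (by rw [hcon, map_zero]))
      set c : K := x u0 / algebraMap k K (g0 u0) with hc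
      set y : Laur K m := x - c • laurExt k K m g0 with hy
      have ycoef : ∀ u, y u = x u - c * algebraMap k K (g0 u) := by
        intro u
        rw [hy, AddMonoidAlgebra.coeff_sub, AddMonoidAlgebra.coeff_smul, Finsupp.sub_apply, Finsupp.smul_apply, smul_eq_mul, Stmt12Aux.laurExt_apply]
      have hyu0 : y u0 = 0 := by rw [ycoef, hc, div_mul_cancel₀ _ hg0u0, sub_self]
      have hysub : y.coeff.support ⊆ x.coeff.support := by
        intro u hu
        rw [Finsupp.mem_support_iff] at hu ⊢
        intro hxu
        apply hu
        have hu' : u ∉ x.coeff.support := Finsupp.notMem_support_iff.2 hxu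
        have hg0u : g0 u = 0 := Finsupp.notMem_support_iff.1 (by rw [hgsupp]; exact hu')
        rw [ycoef, hxu, hg0u, map_zero, mul_zero, sub_zero]
      have hyzero : y = 0 := by
        by_contra hy0
        have hyM : y ∈ M := Submodule.sub_mem _ hxM (Submodule.smul_mem _ _ hEg0M)
        have hEq := claimA y hyM hy0 hysub
        have : u0 ∈ y.coeff.support := by rw [hEq]; exact hu0x
        exact (Finsupp.mem_support_iff.1 this) hyu0
      have hxc : ∀ u, x u = c * algebraMap k K (g0 u) := by
        intro u
        have h1 : y u = 0 := by rw [hyzero]; rfl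
        rw [ycoef u] at h1
        exact sub_eq_zero.1 h1
      have hc0 : c ≠ 0 := fun hh => hxu0 (by rw [hxc u0, hh, zero_mul])
      obtain ⟨γ, hγ⟩ := WithTop.ne_top_iff_exists.1 (hnd c hc0)
      have hgval : ∀ u ∈ x.coeff.support, νk (g0 u) = (((ν (x u)).untopD 0 - γ : ℝ) : Rbar) := by
        intro u hu
        have h1 : ν (x u) = ν c + νk (g0 u) := by rw [hxc u, hν.map_mul, hext]
        rw [Stmt12Aux.nu_coe hnd hu, ← hγ] at h1
        exact Stmt12Aux.eq_coe_of_coe_add h1.symm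
      obtain ⟨p, hp, q, hq, hpq, hpqeq, hpqmin⟩ := hv g0 (hwI j0) hw0
      have hpx : p ∈ x.coeff.support := by rw [← hgsupp]; exact hp
      have hqx : q ∈ x.coeff.support := by rw [← hgsupp]; exact hq
      have hu0g : u0 ∈ g0.coeff.support := by rw [hgsupp]; exact hu0x
      have keyle : ∀ z ∈ x.coeff.support,
          νk (g0 z) + ((∑ i, (z i : ℝ) * v i : ℝ) : Rbar)
            ≤ νk (g0 u0) + ((∑ i, (u0 i : ℝ) * v i : ℝ) : Rbar) →
          Stmt12Aux.tv ν v x z ≤ Stmt12Aux.tv ν v x u0 := by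
        intro z hz hle
        rw [hgval z hz, hgval u0 hu0x, ← WithTop.coe_add, ← WithTop.coe_add,
          WithTop.coe_le_coe] at hle
        simp only [Stmt12Aux.tv]
        linarith
      have hpu0 : p = u0 := by
        by_contra hne2
        exact absurd (keyle p hpx (hpqmin u0 hu0g)) (not_le.2 (hu0min p hpx hne2))
      have hqu0 : q = u0 := by
        by_contra hne2
        have h2 := hpqmin u0 hu0g
        rw [hpqeq] at h2
        exact absurd (keyle q hqx h2) (not_le.2 (hu0min q hqx hne2))
      exact hpq (hpu0.trans hqu0.symm)
  · -- easy direction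
    intro hv f hfI hf0
    have hmt := hv (laurExt k K m f) (Ideal.mem_map_of_mem _ hfI) (Stmt12Aux.laurExt_ne_zero hf0)
    obtain ⟨u, hu, u', hu', hne, heq, hmin⟩ := hmt
    rw [Stmt12Aux.laurExt_support] at hu hu'
    have hval : ∀ z, ν (laurExt k K m f z) = νk (f z) := fun z => by
      rw [Stmt12Aux.laurExt_apply, hext]
    refine ⟨u, hu, u', hu', hne, ?_, ?_⟩
    · rw [← hval u, ← hval u']
      exact heq
    · intro z hz
      have h1 := hmin z (by rw [Stmt12Aux.laurExt_support]; exact hz)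
      rw [hval, hval] at h1
      exact h1

end
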